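/- Let (M,d) be a separable complete metric space with a Markov chain μ_{(·)} : M → P₁(M) having coarse Ricci curvature bounded below by k ∈ ℝ in the sense of Ollivier, i.e. W₁(μ_x, μ_y) ≤ (1−k)·d(x,y) for all x,y ∈ M. Let G be a compact group acting isometrically on M with Haar measure ν_G, quotient map p : M → M*, and define the quotient Markov chain μ̌_{x*} := ∫_G p_♯ μ_{gx} dν_G(g). Then (M*, d*, μ̌_{(·)}) has coarse Ricci curvature bounded below by k: W₁(μ̌_{x*}, μ̌_{y*}) ≤ (1−k)·d*(x*,y*). -/

import Mathlib

open MeasureTheory Filter Set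
open scoped ENNReal

def IsCoupling {X : Type*} [MeasurableSpace X]
    (π : Measure (X × X)) (μ ν : Measure X) : Prop :=
  π.map Prod.fst = μ ∧ π.map Prod.snd = ν

noncomputable def transportCost (p : ℝ) {X : Type*} [PseudoMetricSpace X] [MeasurableSpace X]
    (π : Measure (X × X)) : ℝ≥0∞ :=
  ∫⁻ z, ENNReal.ofReal (dist z.1 z.2 ^ p) ∂π

noncomputable def minCost (p : ℝ) {X : Type*} [PseudoMetricSpace X] [MeasurableSpace X]
    (μ ν : Measure X) : ℝ≥0∞ :=
  ⨅ π : {π : Measure (X × X) // IsCoupling π μ ν}, transportCost p π.1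

/-- The `p`-Wasserstein distance. -/
noncomputable def Wp (p : ℝ) {X : Type*} [PseudoMetricSpace X] [MeasurableSpace X]
    (μ ν : Measure X) : ℝ≥0∞ :=
  minCost p μ ν ^ (1 / p)

def FinMoment (p : ℝ) {X : Type*} [PseudoMetricSpace X] [MeasurableSpace X]
    (μ : Measure X) : Prop :=
  ∃ x₀ : X, (∫⁻ x, ENNReal.ofReal (dist x x₀ ^ p) ∂μ) ≠ ∞

open scoped NNReal

namespace OQ

variable {X Y : Type*}

lemma transportCost_one [PseudoMetricSpace X] [MeasurableSpace X] (π : Measure (X × X)) :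
    transportCost 1 π = ∫⁻ z, edist z.1 z.2 ∂π := by
  unfold transportCost
  congr 1; funext z; rw [Real.rpow_one, edist_dist]

lemma Wp_one [PseudoMetricSpace X] [MeasurableSpace X] (μ ν : Measure X) :
    Wp 1 μ ν = minCost 1 μ ν := by
  unfold Wp; norm_num

lemma minCost_le_cost [PseudoMetricSpace X] [MeasurableSpace X] {π : Measure (X × X)}
    {μ ν : Measure X} (h : IsCoupling π μ ν) : minCost 1 μ ν ≤ transportCost 1 π :=
  iInf_le (fun π : {π : Measure (X × X) // IsCoupling π μ ν} => transportCost 1 π.1) ⟨π, h⟩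

lemma isCoupling_prod [MeasurableSpace X] (μ ν : Measure X)
    [IsProbabilityMeasure μ] [IsProbabilityMeasure ν] : IsCoupling (μ.prod ν) μ ν := by
  constructor
  · simp [Measure.map_fst_prod]
  · simp [Measure.map_snd_prod]

/-- existence of near optimal couplings -/
lemma exists_coupling_cost_lt [PseudoMetricSpace X] [MeasurableSpace X] {μ ν : Measure X}
    {c : ℝ≥0∞} (hmc : minCost 1 μ ν ≤ c) (hc : c ≠ ∞) {ε : ℝ≥0∞} (hε : ε ≠ 0) :
    ∃ π : Measure (X × X), IsCoupling π μ ν ∧ ∫⁻ z, edist z.1 z.2 ∂π < c + ε := by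
  have h2 : minCost 1 μ ν < c + ε := lt_of_le_of_lt hmc (ENNReal.lt_add_right hc hε)
  obtain ⟨⟨π, hπ⟩, hlt⟩ := iInf_lt_iff.mp h2
  exact ⟨π, hπ, by rwa [transportCost_one] at hlt⟩

section Map
variable [MetricSpace X] [MeasurableSpace X] [BorelSpace X] [SecondCountableTopology X]
  [MetricSpace Y] [MeasurableSpace Y] [BorelSpace Y] [SecondCountableTopology Y]

lemma isCoupling_map {f : X → Y} (hf : Measurable f) {π : Measure (X × X)} {μ ν : Measure X}
    (h : IsCoupling π μ ν) :
    IsCoupling (π.map (Prod.map f f)) (μ.map f) (ν.map f) := by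
  constructor
  · rw [Measure.map_map measurable_fst (hf.prodMap hf), show (Prod.fst ∘ Prod.map f f) = f ∘ Prod.fst from rfl,
      ← Measure.map_map hf measurable_fst, h.1]
  · rw [Measure.map_map measurable_snd (hf.prodMap hf), show (Prod.snd ∘ Prod.map f f) = f ∘ Prod.snd from rfl,
      ← Measure.map_map hf measurable_snd, h.2]

lemma minCost_map_le {f : X → Y} (hf : Measurable f)
    (hlip : ∀ a b : X, edist (f a) (f b) ≤ edist a b) (μ ν : Measure X) :
    minCost 1 (μ.map f) (ν.map f) ≤ minCost 1 μ ν := by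
  refine le_iInf fun π => ?_
  refine le_trans (minCost_le_cost (isCoupling_map hf π.2)) ?_
  rw [transportCost_one, transportCost_one,
    lintegral_map measurable_edist (hf.prodMap hf)]
  exact lintegral_mono fun z => hlip z.1 z.2

end Map

section Dual
variable [MetricSpace X] [MeasurableSpace X] [BorelSpace X] [SecondCountableTopology X]

lemma lintegral_le_of_coupling {f : X → ℝ≥0∞} (hf : Measurable f) {L : ℝ≥0∞}
    (hlip : ∀ p q : X, f p ≤ f q + L * edist p q) {π : Measure (X × X)} {μ ν : Measure X}
    (h : IsCoupling π μ ν) :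
    ∫⁻ w, f w ∂μ ≤ ∫⁻ w, f w ∂ν + L * ∫⁻ z, edist z.1 z.2 ∂π := by
  rw [← h.1, ← h.2, lintegral_map hf measurable_fst, lintegral_map hf measurable_snd]
  calc ∫⁻ z, f z.1 ∂π ≤ ∫⁻ z, (f z.2 + L * edist z.1 z.2) ∂π :=
        lintegral_mono fun z => hlip z.1 z.2
    _ = ∫⁻ z, f z.2 ∂π + L * ∫⁻ z, edist z.1 z.2 ∂π := by
        rw [lintegral_add_left (show Measurable fun z : X × X => f z.2 from hf.comp measurable_snd),
          lintegral_const_mul L measurable_edist]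

end Dual

section MeasB
variable [MetricSpace X] [MeasurableSpace X] [BorelSpace X] [SecondCountableTopology X]

lemma measurable_markov (μ : X → Measure X) (hprob : ∀ x, IsProbabilityMeasure (μ x)) (c : ℝ≥0)
    (hlip : ∀ p q : X, minCost 1 (μ p) (μ q) ≤ ENNReal.ofReal (c * dist p q)) :
    Measurable μ := by
  -- continuity of z ↦ ∫⁻ f dμ z for bounded "Lipschitz" f
  have key : ∀ (f : X → ℝ≥0∞) (L : ℝ≥0), Measurable f → (∀ w, f w ≤ 1) →
      (∀ p q : X, f p ≤ f q + (L : ℝ≥0∞) * edist p q) →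
      Continuous fun z => ∫⁻ w, f w ∂(μ z) := by
    intro f L hf hbd hLf
    set I : X → ℝ≥0∞ := fun z => ∫⁻ w, f w ∂(μ z) with hI
    have hIle : ∀ z, I z ≤ 1 := by
      intro z
      haveI := hprob z
      calc I z ≤ ∫⁻ _, 1 ∂(μ z) := lintegral_mono hbd
        _ = 1 := by simp
    have hInt : ∀ z, I z ≠ ∞ := fun z => (lt_of_le_of_lt (hIle z) ENNReal.one_lt_top).ne
    have hmain : ∀ p q : X, I p ≤ I q + (L : ℝ≥0∞) * ENNReal.ofReal (c * dist p q) := by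
      intro p q
      haveI := hprob p; haveI := hprob q
      refine ENNReal.le_of_forall_pos_le_add fun ε hε hfin => ?_
      set ε' : ℝ≥0 := ε / (L + 1) with hε'
      have hε'0 : (ε' : ℝ≥0∞) ≠ 0 := by
        simp only [hε', ne_eq, ENNReal.coe_eq_zero]
        exact (div_pos hε (add_pos_of_nonneg_of_pos zero_le' zero_lt_one)).ne'
      obtain ⟨π, hπ, hπc⟩ := exists_coupling_cost_lt (hlip p q) ENNReal.ofReal_ne_top hε'0
      have h1 : I p ≤ I q + (L : ℝ≥0∞) * ∫⁻ z, edist z.1 z.2 ∂π :=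
        lintegral_le_of_coupling hf hLf hπ
      have h2 : (L : ℝ≥0∞) * ∫⁻ z, edist z.1 z.2 ∂π ≤
          (L : ℝ≥0∞) * (ENNReal.ofReal (c * dist p q) + ε') :=
        mul_le_mul_right hπc.le _
      have h3 : (L : ℝ≥0∞) * ε' ≤ ε := by
        rw [← ENNReal.coe_mul]
        refine ENNReal.coe_le_coe.mpr ?_
        calc L * ε' ≤ (L + 1) * ε' := mul_le_mul_left (le_add_of_nonneg_right zero_le') _
          _ = ε := by
            rw [hε', mul_div_cancel₀]
            exact (add_pos_of_nonneg_of_pos zero_le' zero_lt_one).ne'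
      calc I p ≤ I q + (L : ℝ≥0∞) * (ENNReal.ofReal (c * dist p q) + ε') :=
            h1.trans (add_le_add_right h2 _)
        _ = (I q + (L : ℝ≥0∞) * ENNReal.ofReal (c * dist p q)) + (L : ℝ≥0∞) * ε' := by ring
        _ ≤ (I q + (L : ℝ≥0∞) * ENNReal.ofReal (c * dist p q)) + ε := add_le_add_right h3 _
    -- pass to real values
    set J : X → ℝ := fun z => (I z).toReal with hJ
    have hJlip : LipschitzWith (L * c) J := by
      refine LipschitzWith.of_dist_le_mul fun p q => ?_
      have hco : ∀ p q : X, J p - J q ≤ (L * c : ℝ≥0) * dist p q := by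
        intro p q
        have := hmain p q
        have htr : J p ≤ J q + ((L : ℝ≥0∞) * ENNReal.ofReal (c * dist p q)).toReal := by
          rw [← ENNReal.toReal_add (hInt q) (by simp [ENNReal.mul_ne_top])]
          exact ENNReal.toReal_mono (by simp [ENNReal.add_ne_top, hInt q, ENNReal.mul_ne_top]) this
        have hre : ((L : ℝ≥0∞) * ENNReal.ofReal (c * dist p q)).toReal = (L * c : ℝ≥0) * dist p q := by
          rw [ENNReal.toReal_mul, ENNReal.toReal_ofReal (by positivity), ENNReal.coe_toReal]
          push_cast; ring
        rw [hre] at htr; linarith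
      rw [Real.dist_eq, abs_sub_le_iff]
      constructor
      · simpa using hco p q
      · simpa [dist_comm] using hco q p
    exact (continuous_congr fun z => (ENNReal.ofReal_toReal (hInt z))).mp
      (ENNReal.continuous_ofReal.comp hJlip.continuous)
  -- measurability of z ↦ μ z T for each Borel T
  have main : ∀ T : Set X, MeasurableSet T → Measurable fun z => μ z T := by
    have hgen : (inferInstance : MeasurableSpace X) =
        MeasurableSpace.generateFrom {s : Set X | IsClosed s} :=
      BorelSpace.measurable_eq.trans borel_eq_generateFrom_isClosed
    intro T hT
    refine MeasurableSpace.induction_on_inter (C := fun T _ => Measurable fun z => μ z T) hgen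
      (fun s hs t ht _ => hs.inter ht) (by simp) ?_ ?_ ?_ _ hT
    · intro T hT
      rcases eq_empty_or_nonempty T with rfl | hne
      · simp
      · -- T closed nonempty
        have hTc : IsClosed T := hT
        set f : ℕ → X → ℝ≥0∞ := fun n w => ENNReal.ofReal (1 - n * Metric.infDist w T) with hfdef
        have hfm : ∀ n, Measurable (f n) :=
          fun n => (ENNReal.continuous_ofReal.comp (continuous_const.sub (continuous_const.mul (Metric.continuous_infDist_pt T)))).measurable
        have hfb : ∀ n w, f n w ≤ 1 := by
          intro n w
          rw [hfdef]
          calc ENNReal.ofReal (1 - n * Metric.infDist w T) ≤ ENNReal.ofReal 1 :=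
                ENNReal.ofReal_le_ofReal (by
                  have := Metric.infDist_nonneg (x := w) (s := T); nlinarith)
            _ = 1 := ENNReal.ofReal_one
        have hflip : ∀ n, ∀ p q : X, f n p ≤ f n q + ((n : ℝ≥0) : ℝ≥0∞) * edist p q := by
          intro n p q
          rw [hfdef]
          have h1 : Metric.infDist q T ≤ Metric.infDist p T + dist q p :=
            Metric.infDist_le_infDist_add_dist
          have h2 : (1 : ℝ) - n * Metric.infDist p T ≤
              (1 - n * Metric.infDist q T) + n * dist p q := by
            have hn : (0:ℝ) ≤ n := Nat.cast_nonneg n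
            have := dist_comm p q
            nlinarith
          calc ENNReal.ofReal (1 - n * Metric.infDist p T)
              ≤ ENNReal.ofReal ((1 - n * Metric.infDist q T) + n * dist p q) :=
                ENNReal.ofReal_le_ofReal h2
            _ ≤ ENNReal.ofReal (1 - n * Metric.infDist q T) + ENNReal.ofReal (n * dist p q) :=
                ENNReal.ofReal_add_le
            _ = ENNReal.ofReal (1 - n * Metric.infDist q T) + ((n : ℝ≥0) : ℝ≥0∞) * edist p q := by
                rw [ENNReal.ofReal_mul (Nat.cast_nonneg n), edist_dist]
                norm_num
        have hanti : ∀ w, Antitone fun n => f n w := by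
          intro w m n hmn
          apply ENNReal.ofReal_le_ofReal
          have := Metric.infDist_nonneg (x := w) (s := T)
          have : (m:ℝ) * Metric.infDist w T ≤ n * Metric.infDist w T := by
            apply mul_le_mul_of_nonneg_right _ this
            exact_mod_cast hmn
          linarith
        have hlim : ∀ w, ⨅ n, f n w = T.indicator (fun _ => (1:ℝ≥0∞)) w := by
          intro w
          by_cases hw : w ∈ T
          · have h0 : Metric.infDist w T = 0 := (hTc.mem_iff_infDist_zero hne).mp hw
            simp [hfdef, h0, indicator_of_mem hw]
          · rw [indicator_of_notMem hw]
            have hpos : 0 < Metric.infDist w T := by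
              rcases (Metric.infDist_nonneg (x := w) (s := T)).lt_or_eq with h | h
              · exact h
              · exact absurd ((hTc.mem_iff_infDist_zero hne).mpr h.symm) hw
            refine le_antisymm ?_ zero_le
            obtain ⟨n, hn⟩ : ∃ n : ℕ, 1 ≤ n * Metric.infDist w T := by
              obtain ⟨n, hn⟩ := exists_nat_ge (1 / Metric.infDist w T)
              exact ⟨n, by rw [div_le_iff₀ hpos] at hn; linarith⟩
            refine le_trans (iInf_le _ n) ?_
            rw [hfdef]
            simp only [ENNReal.ofReal_eq_zero.mpr (by linarith : 1 - n * Metric.infDist w T ≤ 0)]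
            exact le_refl 0
        have heq : (fun z => μ z T) = fun z => ⨅ n, ∫⁻ w, f n w ∂(μ z) := by
          funext z
          haveI := hprob z
          rw [← lintegral_iInf hfm (fun m n h => fun w => hanti w h)
            (lt_of_le_of_lt (by exact le_trans (lintegral_mono (hfb 0)) (by simp)) ENNReal.one_lt_top).ne]
          have : ∀ w, ⨅ n, f n w = T.indicator (fun _ => (1:ℝ≥0∞)) w := hlim
          rw [show (fun w => ⨅ n, f n w) = T.indicator (fun _ => (1:ℝ≥0∞)) from funext hlim,
            lintegral_indicator hTc.measurableSet, setLIntegral_one]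
        rw [heq]
        exact Measurable.iInf fun n => (key (f n) n (hfm n) (hfb n) (hflip n)).measurable
    · intro T hT ih
      have : (fun z => μ z Tᶜ) = fun z => 1 - μ z T := by
        funext z
        haveI := hprob z
        rw [measure_compl hT (measure_ne_top _ _), measure_univ]
      rw [this]
      exact measurable_const.sub ih
    · intro g hdis hgm ih
      have : (fun z => μ z (⋃ i, g i)) = fun z => ∑' i, μ z (g i) := by
        funext z; exact measure_iUnion hdis hgm
      rw [this]
      exact Measurable.ennreal_tsum ih
  exact Measure.measurable_of_measurable_coe μ main

end MeasB
section CAux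

variable {Ω : Type*} [MeasurableSpace Ω]

/-- measurability in a parameter of a product of finite measures, applied to a set -/
lemma measurable_prod_apply {Q : Type*} [MeasurableSpace Q]
    (α β : Ω → Measure Q)
    (hα : ∀ s : Set Q, MeasurableSet s → Measurable fun ω => α ω s)
    (hβ : ∀ s : Set Q, MeasurableSet s → Measurable fun ω => β ω s)
    (hαf : ∀ ω, α ω univ ≤ 1) (hβf : ∀ ω, β ω univ ≤ 1)
    {S : Set (Q × Q)} (hS : MeasurableSet S) :
    Measurable fun ω => (α ω).prod (β ω) S := by
  have hfinα : ∀ ω, IsFiniteMeasure (α ω) :=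
    fun ω => ⟨lt_of_le_of_lt (hαf ω) ENNReal.one_lt_top⟩
  have hfinβ : ∀ ω, IsFiniteMeasure (β ω) :=
    fun ω => ⟨lt_of_le_of_lt (hβf ω) ENNReal.one_lt_top⟩
  refine MeasurableSpace.induction_on_inter
    (C := fun S _ => Measurable fun ω => (α ω).prod (β ω) S)
    generateFrom_prod.symm isPiSystem_prod (by simp) ?_ ?_ ?_ _ hS
  · rintro S ⟨s, hs, t, ht, rfl⟩
    simp only [mem_setOf_eq] at hs ht
    have : (fun ω => (α ω).prod (β ω) (s ×ˢ t)) = fun ω => α ω s * β ω t := by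
      funext ω
      haveI := hfinα ω; haveI := hfinβ ω
      exact Measure.prod_prod s t
    rw [this]
    exact (hα s hs).mul (hβ t ht)
  · intro S hSm ih
    have : (fun ω => (α ω).prod (β ω) Sᶜ) = fun ω => α ω univ * β ω univ - (α ω).prod (β ω) S := by
      funext ω
      haveI := hfinα ω; haveI := hfinβ ω
      rw [measure_compl hSm (measure_ne_top _ _), ← Measure.prod_prod univ univ,
        univ_prod_univ]
    rw [this]
    exact ((hα univ .univ).mul (hβ univ .univ)).sub ih
  · intro g hdis hgm ih
    have : (fun ω => (α ω).prod (β ω) (⋃ i, g i)) = fun ω => ∑' i, (α ω).prod (β ω) (g i) := by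
      funext ω; exact measure_iUnion hdis hgm
    rw [this]
    exact Measurable.ennreal_tsum ih

lemma exists_rat_approx (x : ℝ≥0∞) (hx : x ≠ ∞) {δ : ℝ≥0∞} (hδ : δ ≠ 0) :
    ∃ q : ℚ, 0 ≤ q ∧ ENNReal.ofReal q ≤ x ∧ x ≤ ENNReal.ofReal q + δ := by
  rcases eq_or_ne x 0 with rfl | hx0
  · exact ⟨0, le_refl 0, by simp, by simp⟩
  rcases eq_or_ne δ ∞ with rfl | hδt
  · exact ⟨0, le_refl 0, by simp, by simp⟩
  set xr := x.toReal with hxr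
  have hxrpos : 0 < xr := ENNReal.toReal_pos hx0 hx
  set δr := δ.toReal with hδr
  have hδrpos : 0 < δr := ENNReal.toReal_pos hδ hδt
  have hlow : 0 ≤ xr - min δr xr := by
    have := min_le_right δr xr; linarith
  have hlt : xr - min δr xr < xr := by
    have := lt_min hδrpos hxrpos; linarith
  obtain ⟨q, hq1, hq2⟩ := exists_rat_btwn hlt
  refine ⟨q, by exact_mod_cast le_trans hlow hq1.le, ?_, ?_⟩
  · rw [← ENNReal.ofReal_toReal hx]
    exact ENNReal.ofReal_le_ofReal hq2.le
  · rw [← ENNReal.ofReal_toReal hx, ← ENNReal.ofReal_toReal hδt]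
    calc ENNReal.ofReal xr ≤ ENNReal.ofReal ((q : ℝ) + δr) := by
          apply ENNReal.ofReal_le_ofReal
          have := min_le_left δr xr; linarith
      _ ≤ ENNReal.ofReal q + ENNReal.ofReal δr := ENNReal.ofReal_add_le

/-- candidate matrices : lists encoding finitely supported rational matrices -/
noncomputable def rmat (L : List ((ℕ × ℕ) × ℚ)) (p : ℕ × ℕ) : ℝ≥0∞ :=
  ((L.filter (fun e => e.1 = p)).map (fun e => ENNReal.ofReal (e.2 : ℝ))).sum

lemma rmat_nil (p : ℕ × ℕ) : rmat [] p = 0 := rfl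

lemma rmat_cons (e : (ℕ × ℕ) × ℚ) (L : List ((ℕ × ℕ) × ℚ)) (p : ℕ × ℕ) :
    rmat (e :: L) p = (if e.1 = p then ENNReal.ofReal (e.2 : ℝ) else 0) + rmat L p := by
  unfold rmat
  by_cases h : e.1 = p
  · rw [List.filter_cons_of_pos (by simpa using h), List.map_cons, List.sum_cons, if_pos h]
  · rw [List.filter_cons_of_neg (by simpa using h), if_neg h, zero_add]

lemma exists_rmat (F : Finset (ℕ × ℕ)) (f : ℕ × ℕ → ℚ) :
    ∃ L : List ((ℕ × ℕ) × ℚ), ∀ p, rmat L p = if p ∈ F then ENNReal.ofReal (f p : ℝ) else 0 := by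
  classical
  induction F using Finset.induction_on with
  | empty => exact ⟨[], fun p => by simp [rmat_nil]⟩
  | @insert p₀ F' hp ih =>
    obtain ⟨L', hL'⟩ := ih
    refine ⟨(p₀, f p₀) :: L', fun p => ?_⟩
    rw [rmat_cons, hL']
    by_cases h : p₀ = p
    · subst h
      rw [if_pos rfl, if_neg hp, if_pos (Finset.mem_insert_self _ _), add_zero]
    · rw [if_neg h]
      by_cases h2 : p ∈ F'
      · rw [if_pos h2, if_pos (Finset.mem_insert_of_mem h2), zero_add]
      · rw [if_neg h2, if_neg (by simp [h2, Ne.symm h]), zero_add]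

end CAux
section CFeas

variable {Q : Type*} [MetricSpace Q] [MeasurableSpace Q] [BorelSpace Q]
  [SecondCountableTopology Q]

/-- finiteness of the discretized first moment -/
lemma tsum_moment_ne_top (t : ℕ → Q) (E : ℕ → Set Q) (hEm : ∀ n, MeasurableSet (E n))
    (hEd : Pairwise (Function.onFun Disjoint E)) (hEu : (⋃ n, E n) = univ) (qb : Q)
    {εE : ℝ≥0∞} (hεEt : εE ≠ ∞)
    (hEb : ∀ n, ∀ q ∈ E n, edist (t n) q ≤ εE ∧ edist q (t n) ≤ εE)
    (ξ : Measure Q) [IsProbabilityMeasure ξ] (hm : ∫⁻ q, edist q qb ∂ξ ≠ ∞) :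
    ∑' n, ξ (E n) * (1 + edist (t n) qb) ≠ ∞ := by
  have hmeas : Measurable fun q : Q => εE + edist q qb :=
    measurable_const.add ((continuous_id.edist continuous_const).measurable)
  have hD : ∀ n, ξ (E n) * edist (t n) qb ≤ ∫⁻ q in E n, (εE + edist q qb) ∂ξ := by
    intro n
    calc ξ (E n) * edist (t n) qb = ∫⁻ _ in E n, edist (t n) qb ∂ξ := by
          rw [setLIntegral_const, mul_comm]
      _ ≤ ∫⁻ q in E n, (εE + edist q qb) ∂ξ := by
          refine setLIntegral_mono hmeas fun q hq => ?_
          calc edist (t n) qb ≤ edist (t n) q + edist q qb := edist_triangle _ _ _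
            _ ≤ εE + edist q qb := add_le_add_left (hEb n q hq).1 _
  have hsum : ∑' n, ∫⁻ q in E n, (εE + edist q qb) ∂ξ = εE + ∫⁻ q, edist q qb ∂ξ := by
    rw [← lintegral_iUnion hEm hEd, hEu, setLIntegral_univ,
      lintegral_add_left measurable_const, lintegral_const, measure_univ, mul_one]
  have h1 : ∑' n, ξ (E n) * (1 + edist (t n) qb) =
      ∑' n, ξ (E n) + ∑' n, ξ (E n) * edist (t n) qb := by
    rw [← ENNReal.tsum_add]
    exact tsum_congr fun n => by rw [mul_add, mul_one]
  rw [h1]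
  have h2 : ∑' n, ξ (E n) = 1 := by
    rw [← measure_iUnion hEd hEm, hEu, measure_univ]
  refine ENNReal.add_ne_top.mpr ⟨by simp [h2], ?_⟩
  refine ne_top_of_le_ne_top ?_ ((ENNReal.tsum_le_tsum hD).trans hsum.le)
  exact ENNReal.add_ne_top.mpr ⟨hεEt, hm⟩

/-- existence of a feasible candidate matrix -/
lemma exists_feasible (t : ℕ → Q) (E : ℕ → Set Q) (hEm : ∀ n, MeasurableSet (E n))
    (hEd : Pairwise (Function.onFun Disjoint E)) (hEu : (⋃ n, E n) = univ) (qb : Q)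
    {εE : ℝ≥0∞} (hεE : εE ≠ 0) (hεEt : εE ≠ ∞)
    (hEb : ∀ n, ∀ q ∈ E n, edist (t n) q ≤ εE ∧ edist q (t n) ≤ εE)
    (μ1 μ2 : Measure Q) [IsProbabilityMeasure μ1] [IsProbabilityMeasure μ2]
    (hm1 : ∫⁻ q, edist q qb ∂μ1 ≠ ∞) (hm2 : ∫⁻ q, edist q qb ∂μ2 ≠ ∞)
    (c : ℝ≥0∞) (hc : c ≠ ∞) (hmc : minCost 1 μ1 μ2 ≤ c) :
    ∃ L : List ((ℕ × ℕ) × ℚ),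
      (∀ n, (∑' m, rmat L (n, m)) ≤ μ1 (E n)) ∧
      (∀ m, (∑' n, rmat L (n, m)) ≤ μ2 (E m)) ∧
      ((∑' n, (μ1 (E n) - ∑' m, rmat L (n, m)) * (1 + edist (t n) qb)) ≤ εE) ∧
      ((∑' m, (μ2 (E m) - ∑' n, rmat L (n, m)) * (1 + edist (t m) qb)) ≤ εE) ∧
      ((∑' p : ℕ × ℕ, rmat L p * edist (t p.1) (t p.2)) ≤ c + 3 * εE) := by
  classical
  obtain ⟨π, hπ, hπc⟩ := exists_coupling_cost_lt hmc hc hεE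
  have hπuniv : π univ = 1 := by
    have h : π.map Prod.fst univ = 1 := by rw [hπ.1, measure_univ]
    rwa [Measure.map_apply measurable_fst MeasurableSet.univ, preimage_univ] at h
  haveI : IsProbabilityMeasure π := ⟨hπuniv⟩
  have hRm : ∀ p : ℕ × ℕ, MeasurableSet (E p.1 ×ˢ E p.2) := fun p => (hEm p.1).prod (hEm p.2)
  -- row and column sums of the discretized coupling
  have hrows : ∀ n, (∑' m, π (E n ×ˢ E m)) = μ1 (E n) := by
    intro n
    have hd : Pairwise (Function.onFun Disjoint fun m => E n ×ˢ E m) := by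
      intro i j hij
      refine Set.disjoint_left.mpr fun z hzi hzj => ?_
      exact Set.disjoint_left.mp (hEd hij) hzi.2 hzj.2
    rw [← measure_iUnion hd (fun m => hRm (n, m)), ← prod_iUnion, hEu, prod_univ,
      ← Measure.map_apply measurable_fst (hEm n), hπ.1]
  have hcols : ∀ m, (∑' n, π (E n ×ˢ E m)) = μ2 (E m) := by
    intro m
    have hd : Pairwise (Function.onFun Disjoint fun n => E n ×ˢ E m) := by
      intro i j hij
      refine Set.disjoint_left.mpr fun z hzi hzj => ?_
      exact Set.disjoint_left.mp (hEd hij) hzi.1 hzj.1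
    rw [← measure_iUnion hd (fun n => hRm (n, m)), ← iUnion_prod_const, hEu, univ_prod,
      ← Measure.map_apply measurable_snd (hEm m), hπ.2]
  -- cost of the discretized coupling
  have hRd : Pairwise (Function.onFun Disjoint fun p : ℕ × ℕ => E p.1 ×ˢ E p.2) := by
    intro p p' hpp
    by_cases h1 : p.1 = p'.1
    · have h2 : p.2 ≠ p'.2 := fun h2 => hpp (Prod.ext h1 h2)
      refine Set.disjoint_left.mpr fun z hz hz' => ?_
      exact Set.disjoint_left.mp (hEd h2) hz.2 hz'.2
    · refine Set.disjoint_left.mpr fun z hz hz' => ?_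
      exact Set.disjoint_left.mp (hEd h1) hz.1 hz'.1
  have hRu : (⋃ p : ℕ × ℕ, E p.1 ×ˢ E p.2) = univ := by
    refine eq_univ_of_forall fun z => ?_
    have h1 : z.1 ∈ ⋃ n, E n := by rw [hEu]; trivial
    have h2 : z.2 ∈ ⋃ n, E n := by rw [hEu]; trivial
    obtain ⟨n, hn⟩ := mem_iUnion.mp h1
    obtain ⟨m, hm⟩ := mem_iUnion.mp h2
    exact mem_iUnion.mpr ⟨(n, m), ⟨hn, hm⟩⟩
  have hcost : (∑' p : ℕ × ℕ, π (E p.1 ×ˢ E p.2) * edist (t p.1) (t p.2)) ≤ c + 3 * εE := by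
    have hstep : ∀ p : ℕ × ℕ, π (E p.1 ×ˢ E p.2) * edist (t p.1) (t p.2) ≤
        ∫⁻ z in E p.1 ×ˢ E p.2, (edist z.1 z.2 + 2 * εE) ∂π := by
      intro p
      calc π (E p.1 ×ˢ E p.2) * edist (t p.1) (t p.2)
          = ∫⁻ _ in E p.1 ×ˢ E p.2, edist (t p.1) (t p.2) ∂π := by
            rw [setLIntegral_const, mul_comm]
        _ ≤ ∫⁻ z in E p.1 ×ˢ E p.2, (edist z.1 z.2 + 2 * εE) ∂π := by
            refine setLIntegral_mono (measurable_edist.add measurable_const) fun z hz => ?_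
            calc edist (t p.1) (t p.2) ≤ edist (t p.1) z.1 + edist z.1 (t p.2) := edist_triangle _ _ _
              _ ≤ edist (t p.1) z.1 + (edist z.1 z.2 + edist z.2 (t p.2)) :=
                  add_le_add_right (edist_triangle _ _ _) _
              _ ≤ εE + (edist z.1 z.2 + εE) :=
                  add_le_add (hEb p.1 z.1 hz.1).1 (add_le_add_right (hEb p.2 z.2 hz.2).2 _)
              _ = edist z.1 z.2 + 2 * εE := by ring
    calc (∑' p : ℕ × ℕ, π (E p.1 ×ˢ E p.2) * edist (t p.1) (t p.2))
        ≤ ∑' p : ℕ × ℕ, ∫⁻ z in E p.1 ×ˢ E p.2, (edist z.1 z.2 + 2 * εE) ∂π :=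
          ENNReal.tsum_le_tsum hstep
      _ = ∫⁻ z, (edist z.1 z.2 + 2 * εE) ∂π := by
          rw [← lintegral_iUnion hRm hRd, hRu, setLIntegral_univ]
      _ = (∫⁻ z, edist z.1 z.2 ∂π) + 2 * εE := by
          rw [lintegral_add_left measurable_edist, lintegral_const, hπuniv, mul_one]
      _ ≤ (c + εE) + 2 * εE := add_le_add_left hπc.le _
      _ = c + 3 * εE := by ring
  have hcfin : ∀ p : ℕ × ℕ, π (E p.1 ×ˢ E p.2) ≠ ∞ := fun p => measure_ne_top _ _
  set W : ℕ × ℕ → ℝ≥0∞ := fun p => (1 + edist (t p.1) qb) + (1 + edist (t p.2) qb) with hW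
  have hWfin : ∀ p, W p ≠ ∞ := fun p =>
    ENNReal.add_ne_top.mpr ⟨ENNReal.add_ne_top.mpr ⟨ENNReal.one_ne_top, edist_ne_top _ _⟩,
      ENNReal.add_ne_top.mpr ⟨ENNReal.one_ne_top, edist_ne_top _ _⟩⟩
  -- finiteness of the weighted total
  have hMfin : (∑' p : ℕ × ℕ, π (E p.1 ×ˢ E p.2) * W p) ≠ ∞ := by
    have hsplit : ∀ p : ℕ × ℕ, π (E p.1 ×ˢ E p.2) * W p =
        π (E p.1 ×ˢ E p.2) * (1 + edist (t p.1) qb) +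
          π (E p.1 ×ˢ E p.2) * (1 + edist (t p.2) qb) := fun p => by
      simp only [hW]; rw [mul_add]
    rw [tsum_congr hsplit, ENNReal.tsum_add]
    refine ENNReal.add_ne_top.mpr ⟨?_, ?_⟩
    · have h : (∑' p : ℕ × ℕ, π (E p.1 ×ˢ E p.2) * (1 + edist (t p.1) qb)) =
          ∑' n, μ1 (E n) * (1 + edist (t n) qb) := by
        rw [ENNReal.tsum_prod']
        refine tsum_congr fun n => ?_
        show (∑' m, π (E n ×ˢ E m) * (1 + edist (t n) qb)) = _
        rw [ENNReal.tsum_mul_right, hrows n]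
      rw [h]
      exact tsum_moment_ne_top t E hEm hEd hEu qb hεEt hEb μ1 hm1
    · have h : (∑' p : ℕ × ℕ, π (E p.1 ×ˢ E p.2) * (1 + edist (t p.2) qb)) =
          ∑' m, μ2 (E m) * (1 + edist (t m) qb) := by
        rw [ENNReal.tsum_prod', ENNReal.tsum_comm]
        refine tsum_congr fun m => ?_
        show (∑' n, π (E n ×ˢ E m) * (1 + edist (t m) qb)) = _
        rw [ENNReal.tsum_mul_right, hcols m]
      rw [h]
      exact tsum_moment_ne_top t E hEm hEd hEu qb hεEt hEb μ2 hm2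
  -- tail cut
  have hεE2 : (0:ℝ≥0∞) < εE / 2 := ENNReal.div_pos hεE (by norm_num)
  obtain ⟨F, hF⟩ := ((ENNReal.tendsto_tsum_compl_atTop_zero hMfin).eventually_lt_const hεE2).exists
  set S := (∑ p ∈ F, W p) + 1 with hSdef
  have hSne : S ≠ ∞ :=
    ENNReal.add_ne_top.mpr ⟨(ENNReal.sum_lt_top.mpr fun p _ => (hWfin p).lt_top).ne,
      ENNReal.one_ne_top⟩
  have hS0 : S ≠ 0 := by
    rw [hSdef]
    simp [add_eq_zero]
  set δF := εE / 2 / S with hδFdef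
  have hδF0 : δF ≠ 0 := (ENNReal.div_pos hεE2.ne' hSne).ne'
  have hchoice : ∀ p : ℕ × ℕ, ∃ q : ℚ, 0 ≤ q ∧ ENNReal.ofReal q ≤ π (E p.1 ×ˢ E p.2) ∧
      π (E p.1 ×ˢ E p.2) ≤ ENNReal.ofReal q + δF :=
    fun p => exists_rat_approx _ (hcfin p) hδF0
  choose fq _ hq1 hq2 using hchoice
  obtain ⟨L, hL⟩ := exists_rmat F fq
  have hrle : ∀ p, rmat L p ≤ π (E p.1 ×ˢ E p.2) := by
    intro p
    rw [hL]
    split_ifs with h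
    · exact hq1 p
    · exact zero_le
  -- total defect bound
  have hdef : (∑' p : ℕ × ℕ, (π (E p.1 ×ˢ E p.2) - rmat L p) * W p) ≤ εE := by
    set g : ℕ × ℕ → ℝ≥0∞ := fun p => (π (E p.1 ×ˢ E p.2) - rmat L p) * W p with hg
    have hsplit : ∀ p, g p = (if p ∈ F then g p else 0) + (if p ∉ F then g p else 0) := by
      intro p
      by_cases hp : p ∈ F <;> simp [hp]
    have hFin : (∑' p, if p ∈ F then g p else 0) ≤ εE / 2 := by
      rw [tsum_eq_sum (s := F) (fun p hp => if_neg hp)]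
      have hptw : ∀ p ∈ F, (if p ∈ F then g p else 0) ≤ δF * W p := by
        intro p hp
        rw [if_pos hp, hg]
        refine mul_le_mul_left ?_ _
        rw [tsub_le_iff_right, hL, if_pos hp, add_comm]
        exact hq2 p
      calc (∑ p ∈ F, if p ∈ F then g p else 0) ≤ ∑ p ∈ F, δF * W p :=
            Finset.sum_le_sum hptw
        _ = δF * ∑ p ∈ F, W p := by rw [Finset.mul_sum]
        _ ≤ δF * S := mul_le_mul_right (by rw [hSdef]; exact le_self_add) _
        _ = εE / 2 := by rw [hδFdef]; exact ENNReal.div_mul_cancel hS0 hSne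
    have hCompl : (∑' p, if p ∉ F then g p else 0) ≤ εE / 2 := by
      have h1 : (∑' p, if p ∉ F then g p else 0) =
          ∑' p : {x : ℕ × ℕ // x ∉ F}, g (p : ℕ × ℕ) := by
        have h2 : (fun p : ℕ × ℕ => if p ∉ F then g p else 0) =
            ({x : ℕ × ℕ | x ∉ F}).indicator g := by
          funext p; simp [Set.indicator_apply]
        rw [h2, ← tsum_subtype]
        rfl
      rw [h1]
      refine le_trans (ENNReal.tsum_le_tsum fun p => ?_) hF.le
      rw [hg]
      exact mul_le_mul_left tsub_le_self _
    calc (∑' p, g p) = (∑' p, if p ∈ F then g p else 0) + (∑' p, if p ∉ F then g p else 0) := by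
          rw [← ENNReal.tsum_add]
          exact tsum_congr hsplit
      _ ≤ εE / 2 + εE / 2 := add_le_add hFin hCompl
      _ = εE := ENNReal.add_halves εE
  -- row/column bounds
  have hrowsle : ∀ n, (∑' m, rmat L (n, m)) ≤ μ1 (E n) := by
    intro n
    rw [← hrows n]
    exact ENNReal.tsum_le_tsum fun m => hrle (n, m)
  have hcolsle : ∀ m, (∑' n, rmat L (n, m)) ≤ μ2 (E m) := by
    intro m
    rw [← hcols m]
    exact ENNReal.tsum_le_tsum fun n => hrle (n, m)
  have hrowfin : ∀ n, (∑' m, rmat L (n, m)) ≠ ∞ :=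
    fun n => ne_top_of_le_ne_top (measure_ne_top _ _) (hrowsle n)
  have hcolfin : ∀ m, (∑' n, rmat L (n, m)) ≠ ∞ :=
    fun m => ne_top_of_le_ne_top (measure_ne_top _ _) (hcolsle m)
  have hdefnm : (∑' (n) (m), (π (E n ×ˢ E m) - rmat L (n, m)) * W (n, m)) ≤ εE := by
    have h := hdef
    rw [ENNReal.tsum_prod'] at h
    exact h
  have hdefmn : (∑' (m) (n), (π (E n ×ˢ E m) - rmat L (n, m)) * W (n, m)) ≤ εE := by
    rw [ENNReal.tsum_comm]
    exact hdefnm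
  refine ⟨L, hrowsle, hcolsle, ?_, ?_, ?_⟩
  · -- defect on rows
    have hdrow : ∀ n, μ1 (E n) - (∑' m, rmat L (n, m)) = ∑' m, (π (E n ×ˢ E m) - rmat L (n, m)) := by
      intro n
      have hadd : (∑' m, (π (E n ×ˢ E m) - rmat L (n, m))) + (∑' m, rmat L (n, m)) = μ1 (E n) := by
        rw [← ENNReal.tsum_add, ← hrows n]
        exact tsum_congr fun m => tsub_add_cancel_of_le (hrle (n, m))
      exact (ENNReal.eq_sub_of_add_eq (hrowfin n) hadd).symm
    calc (∑' n, (μ1 (E n) - ∑' m, rmat L (n, m)) * (1 + edist (t n) qb))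
        = ∑' (n) (m), (π (E n ×ˢ E m) - rmat L (n, m)) * (1 + edist (t n) qb) := by
          refine tsum_congr fun n => ?_
          rw [hdrow n, ENNReal.tsum_mul_right]
      _ ≤ ∑' (n) (m), (π (E n ×ˢ E m) - rmat L (n, m)) * W (n, m) := by
          refine ENNReal.tsum_le_tsum fun n => ENNReal.tsum_le_tsum fun m => ?_
          refine mul_le_mul_right ?_ _
          simp only [hW]
          exact le_self_add
      _ ≤ εE := hdefnm
  · -- defect on columns
    have hdcol : ∀ m, μ2 (E m) - (∑' n, rmat L (n, m)) = ∑' n, (π (E n ×ˢ E m) - rmat L (n, m)) := by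
      intro m
      have hadd : (∑' n, (π (E n ×ˢ E m) - rmat L (n, m))) + (∑' n, rmat L (n, m)) = μ2 (E m) := by
        rw [← ENNReal.tsum_add, ← hcols m]
        exact tsum_congr fun n => tsub_add_cancel_of_le (hrle (n, m))
      exact (ENNReal.eq_sub_of_add_eq (hcolfin m) hadd).symm
    calc (∑' m, (μ2 (E m) - ∑' n, rmat L (n, m)) * (1 + edist (t m) qb))
        = ∑' (m) (n), (π (E n ×ˢ E m) - rmat L (n, m)) * (1 + edist (t m) qb) := by
          refine tsum_congr fun m => ?_
          rw [hdcol m, ENNReal.tsum_mul_right]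
      _ ≤ ∑' (m) (n), (π (E n ×ˢ E m) - rmat L (n, m)) * W (n, m) := by
          refine ENNReal.tsum_le_tsum fun m => ENNReal.tsum_le_tsum fun n => ?_
          refine mul_le_mul_right ?_ _
          simp only [hW]
          exact le_add_self
      _ ≤ εE := hdefmn
  · -- cost
    calc (∑' p : ℕ × ℕ, rmat L p * edist (t p.1) (t p.2))
        ≤ ∑' p : ℕ × ℕ, π (E p.1 ×ˢ E p.2) * edist (t p.1) (t p.2) :=
          ENNReal.tsum_le_tsum fun p => mul_le_mul_left (hrle p) _
      _ ≤ c + 3 * εE := hcost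

end CFeas
section CMain

lemma exists_partition {Q : Type*} [MetricSpace Q] [MeasurableSpace Q] [BorelSpace Q]
    [TopologicalSpace.SeparableSpace Q] [Nonempty Q] {ε : ℝ} (hε : 0 < ε) :
    ∃ (t : ℕ → Q) (E : ℕ → Set Q), (∀ n, MeasurableSet (E n)) ∧ Pairwise (Function.onFun Disjoint E) ∧
      (⋃ n, E n) = univ ∧ ∀ n, ∀ q ∈ E n, dist q (t n) < ε := by
  classical
  set t := TopologicalSpace.denseSeq Q with ht
  have hdr : DenseRange t := TopologicalSpace.denseRange_denseSeq Q
  set E : ℕ → Set Q := fun n => Metric.ball (t n) ε \ ⋃ (m : ℕ) (_ : m < n), Metric.ball (t m) ε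
    with hE
  have key : ∀ i j, i < j → Disjoint (E i) (E j) := by
    intro i j hij
    refine Set.disjoint_left.mpr fun q hqi hqj => ?_
    exact hqj.2 (mem_iUnion.mpr ⟨i, mem_iUnion.mpr ⟨hij, hqi.1⟩⟩)
  refine ⟨t, E, ?_, ?_, ?_, ?_⟩
  · intro n
    exact measurableSet_ball.diff
      (MeasurableSet.iUnion fun m => MeasurableSet.iUnion fun _ => measurableSet_ball)
  · intro i j hij
    rcases lt_or_gt_of_ne hij with h | h
    · exact key i j h
    · exact (key j i h).symm
  · refine eq_univ_of_forall fun q => ?_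
    have hb : ∃ n, q ∈ Metric.ball (t n) ε := by
      obtain ⟨n, hn⟩ := Metric.denseRange_iff.mp hdr q ε hε
      exact ⟨n, by rwa [Metric.mem_ball]⟩
    refine mem_iUnion.mpr ⟨Nat.find hb, Nat.find_spec hb, ?_⟩
    intro hmem
    simp only [mem_iUnion] at hmem
    obtain ⟨m, hm, hq⟩ := hmem
    exact (Nat.find_min hb hm) hq
  · intro n q hq
    have := hq.1
    rwa [Metric.mem_ball] at this

lemma minCost_bind_le_eps {Ω : Type*} [MeasurableSpace Ω]
    {Q : Type*} [MetricSpace Q] [MeasurableSpace Q] [BorelSpace Q]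
    [TopologicalSpace.SeparableSpace Q] [Nonempty Q]
    (ν : Measure Ω) [IsProbabilityMeasure ν]
    (φ ψ : Ω → Measure Q) (hφ : Measurable φ) (hψ : Measurable ψ)
    (hφp : ∀ ω, IsProbabilityMeasure (φ ω)) (hψp : ∀ ω, IsProbabilityMeasure (ψ ω))
    (qb : Q)
    (hφm : ∀ ω, ∫⁻ q, edist q qb ∂(φ ω) ≠ ∞) (hψm : ∀ ω, ∫⁻ q, edist q qb ∂(ψ ω) ≠ ∞)
    (c : ℝ≥0∞) (hc : c ≠ ∞) (hmin : ∀ ω, minCost 1 (φ ω) (ψ ω) ≤ c)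
    {ε : ℝ} (hε : 0 < ε) :
    minCost 1 (ν.bind φ) (ν.bind ψ) ≤ c + 7 * ENNReal.ofReal ε := by
  classical
  haveI : SecondCountableTopology Q := UniformSpace.secondCountable_of_separable Q
  obtain ⟨t, E, hEm, hEd, hEu, hEdist⟩ := exists_partition (Q := Q) hε
  set εE := ENNReal.ofReal ε with hεEdef
  have hεE0 : εE ≠ 0 := (ENNReal.ofReal_pos.mpr hε).ne'
  have hεEt : εE ≠ ∞ := ENNReal.ofReal_ne_top
  have hEb : ∀ n, ∀ q ∈ E n, edist (t n) q ≤ εE ∧ edist q (t n) ≤ εE := by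
    intro n q hq
    have h := (hEdist n q hq).le
    constructor
    · rw [edist_dist, dist_comm]
      exact ENNReal.ofReal_le_ofReal h
    · rw [edist_dist]
      exact ENNReal.ofReal_le_ofReal h
  set a : ℕ → Ω → ℝ≥0∞ := fun n ω => φ ω (E n) with ha
  set b : ℕ → Ω → ℝ≥0∞ := fun m ω => ψ ω (E m) with hb
  have meas_a : ∀ n, Measurable (a n) := fun n => (Measure.measurable_coe (hEm n)).comp hφ
  have meas_b : ∀ m, Measurable (b m) := fun m => (Measure.measurable_coe (hEm m)).comp hψ
  have hafin : ∀ n ω, a n ω ≠ ∞ := fun n ω => by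
    haveI := hφp ω; exact measure_ne_top _ _
  have hbfin : ∀ m ω, b m ω ≠ ∞ := fun m ω => by
    haveI := hψp ω; exact measure_ne_top _ _
  have hsa : ∀ ω, ∑' n, a n ω = 1 := fun ω => by
    haveI := hφp ω
    simp only [ha]
    rw [← measure_iUnion hEd hEm, hEu, measure_univ]
  have hsb : ∀ ω, ∑' m, b m ω = 1 := fun ω => by
    haveI := hψp ω
    simp only [hb]
    rw [← measure_iUnion hEd hEm, hEu, measure_univ]
  -- selection of a feasible candidate
  obtain ⟨enum, henum⟩ := exists_surjective_nat (List ((ℕ × ℕ) × ℚ))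
  set Feas : List ((ℕ × ℕ) × ℚ) → Ω → Prop := fun L ω =>
    (∀ n, (∑' m, rmat L (n, m)) ≤ a n ω) ∧
    (∀ m, (∑' n, rmat L (n, m)) ≤ b m ω) ∧
    ((∑' n, (a n ω - ∑' m, rmat L (n, m)) * (1 + edist (t n) qb)) ≤ εE) ∧
    ((∑' m, (b m ω - ∑' n, rmat L (n, m)) * (1 + edist (t m) qb)) ≤ εE) ∧
    ((∑' p : ℕ × ℕ, rmat L p * edist (t p.1) (t p.2)) ≤ c + 3 * εE) with hFeasDef
  have hex : ∀ ω, ∃ j : ℕ, Feas (enum j) ω := by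
    intro ω
    haveI := hφp ω; haveI := hψp ω
    obtain ⟨L, h1, h2, h3, h4, h5⟩ := exists_feasible t E hEm hEd hEu qb hεE0 hεEt hEb
      (φ ω) (ψ ω) (hφm ω) (hψm ω) c hc (hmin ω)
    obtain ⟨j, rfl⟩ := henum L
    exact ⟨j, h1, h2, h3, h4, h5⟩
  have hmeasF : ∀ j, MeasurableSet {ω | Feas (enum j) ω} := by
    intro j
    simp only [hFeasDef, setOf_and]
    refine MeasurableSet.inter ?_ (MeasurableSet.inter ?_ (MeasurableSet.inter ?_
      (MeasurableSet.inter ?_ ?_)))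
    · rw [setOf_forall]
      exact MeasurableSet.iInter fun n => measurableSet_le measurable_const (meas_a n)
    · rw [setOf_forall]
      exact MeasurableSet.iInter fun m => measurableSet_le measurable_const (meas_b m)
    · refine measurableSet_le (Measurable.ennreal_tsum fun n => ?_) measurable_const
      exact ((meas_a n).sub measurable_const).mul measurable_const
    · refine measurableSet_le (Measurable.ennreal_tsum fun m => ?_) measurable_const
      exact ((meas_b m).sub measurable_const).mul measurable_const
    · exact MeasurableSet.const _
  set jsel : Ω → ℕ := fun ω => Nat.find (hex ω) with hjsel
  have hjmeas : Measurable jsel := measurable_find hex hmeasF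
  set R : Ω → ℕ × ℕ → ℝ≥0∞ := fun ω => rmat (enum (jsel ω)) with hR
  have meas_R : ∀ p, Measurable fun ω => R ω p := fun p =>
    (measurable_from_nat (f := fun j => rmat (enum j) p)).comp hjmeas
  have hFs : ∀ ω, Feas (enum (jsel ω)) ω := fun ω => Nat.find_spec (hex ω)
  set row : ℕ → Ω → ℝ≥0∞ := fun n ω => ∑' m, R ω (n, m) with hrowdef
  set col : ℕ → Ω → ℝ≥0∞ := fun m ω => ∑' n, R ω (n, m) with hcoldef
  have hrowle : ∀ n ω, row n ω ≤ a n ω := fun n ω => (hFs ω).1 n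
  have hcolle : ∀ m ω, col m ω ≤ b m ω := fun m ω => (hFs ω).2.1 m
  set u : ℕ → Ω → ℝ≥0∞ := fun n ω => a n ω - row n ω with hu
  set v : ℕ → Ω → ℝ≥0∞ := fun m ω => b m ω - col m ω with hv
  set η : Ω → ℝ≥0∞ := fun ω => ∑' n, u n ω with hη
  have hdefa : ∀ ω, (∑' n, u n ω * (1 + edist (t n) qb)) ≤ εE := fun ω => (hFs ω).2.2.1
  have hdefb : ∀ ω, (∑' m, v m ω * (1 + edist (t m) qb)) ≤ εE := fun ω => (hFs ω).2.2.2.1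
  have hcostR : ∀ ω, (∑' p : ℕ × ℕ, R ω p * edist (t p.1) (t p.2)) ≤ c + 3 * εE :=
    fun ω => (hFs ω).2.2.2.2
  have meas_row : ∀ n, Measurable (row n) :=
    fun n => Measurable.ennreal_tsum fun m => meas_R (n, m)
  have meas_col : ∀ m, Measurable (col m) :=
    fun m => Measurable.ennreal_tsum fun n => meas_R (n, m)
  have meas_u : ∀ n, Measurable (u n) := fun n => (meas_a n).sub (meas_row n)
  have meas_v : ∀ m, Measurable (v m) := fun m => (meas_b m).sub (meas_col m)
  have meas_η : Measurable η := Measurable.ennreal_tsum meas_u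
  -- sum identities
  have hRtot : ∀ ω, (∑' n, row n ω) = ∑' p : ℕ × ℕ, R ω p := by
    intro ω
    simp only [hrowdef]
    exact (ENNReal.tsum_prod' (f := R ω)).symm
  have hCtot' : ∀ ω, (∑' m, col m ω) = ∑' p : ℕ × ℕ, R ω p := by
    intro ω
    simp only [hcoldef]
    rw [ENNReal.tsum_prod' (f := R ω), ENNReal.tsum_comm]
  have hηval : ∀ ω, η ω + (∑' p : ℕ × ℕ, R ω p) = 1 := by
    intro ω
    rw [← hRtot ω]
    simp only [hη]
    rw [← ENNReal.tsum_add, ← hsa ω]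
    exact tsum_congr fun n => tsub_add_cancel_of_le (hrowle n ω)
  have hηvval : ∀ ω, (∑' m, v m ω) + (∑' p : ℕ × ℕ, R ω p) = 1 := by
    intro ω
    rw [← hCtot' ω, ← ENNReal.tsum_add, ← hsb ω]
    exact tsum_congr fun m => tsub_add_cancel_of_le (hcolle m ω)
  have hRfin : ∀ ω, (∑' p : ℕ × ℕ, R ω p) ≠ ∞ := by
    intro ω
    have h := hηval ω
    have : (∑' p : ℕ × ℕ, R ω p) ≤ 1 := by
      rw [← h]; exact le_add_self
    exact ne_top_of_le_ne_top ENNReal.one_ne_top this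
  have hveq : ∀ ω, (∑' m, v m ω) = η ω :=
    fun ω => WithTop.add_right_cancel (hRfin ω) ((hηvval ω).trans (hηval ω).symm)
  have hηle1 : ∀ ω, η ω ≤ 1 := by
    intro ω
    rw [← hηval ω]; exact le_self_add
  have hηfin : ∀ ω, η ω ≠ ∞ := fun ω => ne_top_of_le_ne_top ENNReal.one_ne_top (hηle1 ω)
  have huη : ∀ n ω, u n ω ≤ η ω := fun n ω => ENNReal.le_tsum n
  set C : Ω → ℕ × ℕ → ℝ≥0∞ := fun ω p => R ω p + u p.1 ω * v p.2 ω * (η ω)⁻¹ with hC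
  have meas_C : ∀ p, Measurable fun ω => C ω p := by
    intro p
    simp only [hC]
    exact (meas_R p).add (((meas_u p.1).mul (meas_v p.2)).mul meas_η.inv)
  -- row and column sums of C
  have hCrow : ∀ ω n, (∑' m, C ω (n, m)) = a n ω := by
    intro ω n
    simp only [hC]
    rw [ENNReal.tsum_add]
    have hsum : (∑' m, u n ω * v m ω * (η ω)⁻¹) = u n ω * (η ω)⁻¹ * η ω := by
      rw [← hveq ω, ← ENNReal.tsum_mul_left]
      exact tsum_congr fun m => by ring
    rw [hsum]
    rcases eq_or_ne (η ω) 0 with h0 | h0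
    · have hu0 : u n ω = 0 := le_antisymm (h0 ▸ huη n ω) zero_le
      have hrowa : (∑' m, R ω (n, m)) = a n ω := by
        refine le_antisymm (hrowle n ω) ?_
        have h := hu0
        simp only [hu] at h
        exact tsub_eq_zero_iff_le.mp h
      rw [hu0, zero_mul, zero_mul, add_zero]
      exact hrowa
    · rw [mul_assoc, ENNReal.inv_mul_cancel h0 (hηfin ω), mul_one]
      exact add_tsub_cancel_of_le (hrowle n ω)
  have hCcol : ∀ ω m, (∑' n, C ω (n, m)) = b m ω := by
    intro ω m
    simp only [hC]
    rw [ENNReal.tsum_add]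
    have hsum : (∑' n, u n ω * v m ω * (η ω)⁻¹) = v m ω * (η ω)⁻¹ * η ω := by
      simp only [hη]
      rw [← ENNReal.tsum_mul_left]
      exact tsum_congr fun n => by ring
    rw [hsum]
    rcases eq_or_ne (η ω) 0 with h0 | h0
    · have hv0 : v m ω = 0 := by
        have h := hveq ω
        rw [h0] at h
        have : v m ω ≤ (0:ℝ≥0∞) := h ▸ ENNReal.le_tsum m
        exact le_antisymm this zero_le
      have hcola : (∑' n, R ω (n, m)) = b m ω := by
        refine le_antisymm (hcolle m ω) ?_
        have h := hv0
        simp only [hv] at h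
        exact tsub_eq_zero_iff_le.mp h
      rw [hv0, zero_mul, zero_mul, add_zero]
      exact hcola
    · rw [mul_assoc, ENNReal.inv_mul_cancel h0 (hηfin ω), mul_one]
      exact add_tsub_cancel_of_le (hcolle m ω)
  have hCaz : ∀ ω (p : ℕ × ℕ), a p.1 ω = 0 → C ω p = 0 := by
    intro ω p hp
    have h : C ω (p.1, p.2) ≤ a p.1 ω := (hCrow ω p.1) ▸ ENNReal.le_tsum p.2
    rw [hp] at h
    exact le_antisymm (by simpa using h) zero_le
  have hCbz : ∀ ω (p : ℕ × ℕ), b p.2 ω = 0 → C ω p = 0 := by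
    intro ω p hp
    have h : C ω (p.1, p.2) ≤ b p.2 ω := (hCcol ω p.2) ▸ ENNReal.le_tsum p.1
    rw [hp] at h
    exact le_antisymm (by simpa using h) zero_le
  have hCtot : ∀ ω, (∑' p : ℕ × ℕ, C ω p) = 1 := by
    intro ω
    rw [ENNReal.tsum_prod' (f := C ω)]
    calc (∑' (n) (m), C ω (n, m)) = ∑' n, a n ω := tsum_congr fun n => hCrow ω n
      _ = 1 := hsa ω
  -- cost of C
  have hCcost : ∀ ω, (∑' p : ℕ × ℕ, C ω p * edist (t p.1) (t p.2)) ≤ c + 5 * εE := by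
    intro ω
    have hsplit : (∑' p : ℕ × ℕ, C ω p * edist (t p.1) (t p.2)) =
        (∑' p : ℕ × ℕ, R ω p * edist (t p.1) (t p.2)) +
          ∑' p : ℕ × ℕ, u p.1 ω * v p.2 ω * (η ω)⁻¹ * edist (t p.1) (t p.2) := by
      rw [← ENNReal.tsum_add]
      refine tsum_congr fun p => ?_
      simp only [hC]
      ring
    rw [hsplit]
    have hd2 : (∑' p : ℕ × ℕ, u p.1 ω * v p.2 ω * (η ω)⁻¹ * edist (t p.1) (t p.2)) ≤ 2 * εE := by
      have hbound : ∀ p : ℕ × ℕ, u p.1 ω * v p.2 ω * (η ω)⁻¹ * edist (t p.1) (t p.2) ≤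
          u p.1 ω * v p.2 ω * (η ω)⁻¹ * edist (t p.1) qb +
            u p.1 ω * v p.2 ω * (η ω)⁻¹ * edist (t p.2) qb := by
        intro p
        rw [← mul_add]
        refine mul_le_mul_right ?_ _
        calc edist (t p.1) (t p.2) ≤ edist (t p.1) qb + edist qb (t p.2) := edist_triangle _ _ _
          _ = edist (t p.1) qb + edist (t p.2) qb := by rw [edist_comm qb]
      refine le_trans (ENNReal.tsum_le_tsum hbound) ?_
      rw [ENNReal.tsum_add]
      have hA : (∑' p : ℕ × ℕ, u p.1 ω * v p.2 ω * (η ω)⁻¹ * edist (t p.1) qb) ≤ εE := by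
        rcases eq_or_ne (η ω) 0 with h0 | h0
        · have hz : ∀ p : ℕ × ℕ, u p.1 ω * v p.2 ω * (η ω)⁻¹ * edist (t p.1) qb = 0 := by
            intro p
            have hu0 : u p.1 ω = 0 := le_antisymm (h0 ▸ huη p.1 ω) zero_le
            rw [hu0, zero_mul, zero_mul, zero_mul]
          rw [tsum_congr hz]
          simp
        · calc (∑' p : ℕ × ℕ, u p.1 ω * v p.2 ω * (η ω)⁻¹ * edist (t p.1) qb)
              = ∑' n, u n ω * edist (t n) qb * (η ω)⁻¹ * η ω := by
                rw [ENNReal.tsum_prod']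
                refine tsum_congr fun n => ?_
                rw [← hveq ω, ← ENNReal.tsum_mul_left]
                exact tsum_congr fun m => by ring
            _ = ∑' n, u n ω * edist (t n) qb := by
                refine tsum_congr fun n => ?_
                rw [mul_assoc, ENNReal.inv_mul_cancel h0 (hηfin ω), mul_one]
            _ ≤ ∑' n, u n ω * (1 + edist (t n) qb) := by
                refine ENNReal.tsum_le_tsum fun n => mul_le_mul_right le_add_self _
            _ ≤ εE := hdefa ω
      have hB : (∑' p : ℕ × ℕ, u p.1 ω * v p.2 ω * (η ω)⁻¹ * edist (t p.2) qb) ≤ εE := by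
        rcases eq_or_ne (η ω) 0 with h0 | h0
        · have hz : ∀ p : ℕ × ℕ, u p.1 ω * v p.2 ω * (η ω)⁻¹ * edist (t p.2) qb = 0 := by
            intro p
            have hu0 : u p.1 ω = 0 := le_antisymm (h0 ▸ huη p.1 ω) zero_le
            rw [hu0, zero_mul, zero_mul, zero_mul]
          rw [tsum_congr hz]
          simp
        · calc (∑' p : ℕ × ℕ, u p.1 ω * v p.2 ω * (η ω)⁻¹ * edist (t p.2) qb)
              = ∑' m, v m ω * edist (t m) qb * (η ω)⁻¹ * η ω := by
                rw [ENNReal.tsum_prod', ENNReal.tsum_comm]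
                refine tsum_congr fun m => ?_
                simp only [hη]
                rw [← ENNReal.tsum_mul_left]
                exact tsum_congr fun n => by ring
            _ = ∑' m, v m ω * edist (t m) qb := by
                refine tsum_congr fun m => ?_
                rw [mul_assoc, ENNReal.inv_mul_cancel h0 (hηfin ω), mul_one]
            _ ≤ ∑' m, v m ω * (1 + edist (t m) qb) := by
                refine ENNReal.tsum_le_tsum fun m => mul_le_mul_right le_add_self _
            _ ≤ εE := hdefb ω
      calc _ ≤ εE + εE := add_le_add hA hB
        _ = 2 * εE := by ring
    calc _ ≤ (c + 3 * εE) + 2 * εE := add_le_add (hcostR ω) hd2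
      _ = c + 5 * εE := by ring
  -- the transport kernel
  set Θ : Ω → Measure (Q × Q) := fun ω => Measure.sum fun p : ℕ × ℕ =>
    (C ω p * (a p.1 ω)⁻¹ * (b p.2 ω)⁻¹) •
      (((φ ω).restrict (E p.1)).prod ((ψ ω).restrict (E p.2))) with hΘ
  have hrmeas1 : ∀ (n : ℕ) (s : Set Q), MeasurableSet s →
      Measurable fun ω => (φ ω).restrict (E n) s := by
    intro n s hs
    have h : (fun ω => (φ ω).restrict (E n) s) = fun ω => φ ω (s ∩ E n) :=
      funext fun ω => Measure.restrict_apply hs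
    rw [h]
    exact (Measure.measurable_coe (hs.inter (hEm n))).comp hφ
  have hrmeas2 : ∀ (m : ℕ) (s : Set Q), MeasurableSet s →
      Measurable fun ω => (ψ ω).restrict (E m) s := by
    intro m s hs
    have h : (fun ω => (ψ ω).restrict (E m) s) = fun ω => ψ ω (s ∩ E m) :=
      funext fun ω => Measure.restrict_apply hs
    rw [h]
    exact (Measure.measurable_coe (hs.inter (hEm m))).comp hψ
  have hrmass1 : ∀ (n : ℕ) ω, (φ ω).restrict (E n) univ ≤ 1 := by
    intro n ω
    haveI := hφp ω
    rw [Measure.restrict_apply MeasurableSet.univ, univ_inter]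
    exact prob_le_one
  have hrmass2 : ∀ (m : ℕ) ω, (ψ ω).restrict (E m) univ ≤ 1 := by
    intro m ω
    haveI := hψp ω
    rw [Measure.restrict_apply MeasurableSet.univ, univ_inter]
    exact prob_le_one
  have measΘ : Measurable Θ := by
    refine Measure.measurable_of_measurable_coe _ fun S hS => ?_
    have h : (fun ω => Θ ω S) = fun ω => ∑' p : ℕ × ℕ,
        (C ω p * (a p.1 ω)⁻¹ * (b p.2 ω)⁻¹) *
          ((φ ω).restrict (E p.1)).prod ((ψ ω).restrict (E p.2)) S := by
      funext ω
      simp only [hΘ]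
      rw [Measure.sum_apply _ hS]
      exact tsum_congr fun p => by rw [Measure.smul_apply, smul_eq_mul]
    rw [h]
    refine Measurable.ennreal_tsum fun p => ?_
    refine Measurable.mul ?_ ?_
    · exact ((meas_C p).mul (meas_a p.1).inv).mul (meas_b p.2).inv
    · exact measurable_prod_apply _ _ (hrmeas1 p.1) (hrmeas2 p.2)
        (hrmass1 p.1) (hrmass2 p.2) hS
  -- pointwise marginals of Θ
  have hΘfst : ∀ ω (S : Set Q), MeasurableSet S → Θ ω (Prod.fst ⁻¹' S) = φ ω S := by
    intro ω S hS
    haveI := hφp ω; haveI := hψp ω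
    simp only [hΘ]
    rw [Measure.sum_apply _ (measurable_fst hS)]
    have hterm : ∀ p : ℕ × ℕ, ((C ω p * (a p.1 ω)⁻¹ * (b p.2 ω)⁻¹) •
        (((φ ω).restrict (E p.1)).prod ((ψ ω).restrict (E p.2)))) (Prod.fst ⁻¹' S) =
        ((a p.1 ω)⁻¹ * φ ω (S ∩ E p.1)) * C ω p := by
      intro p
      rw [Measure.smul_apply, smul_eq_mul, ← prod_univ, Measure.prod_prod,
        Measure.restrict_apply hS, Measure.restrict_apply MeasurableSet.univ, univ_inter]
      rcases eq_or_ne (b p.2 ω) 0 with h0 | h0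
      · rw [h0, hCbz ω p h0]
        simp
      · have hcancel : (b p.2 ω)⁻¹ * b p.2 ω = 1 := ENNReal.inv_mul_cancel h0 (hbfin p.2 ω)
        calc C ω p * (a p.1 ω)⁻¹ * (b p.2 ω)⁻¹ * (φ ω (S ∩ E p.1) * ψ ω (E p.2))
            = ((a p.1 ω)⁻¹ * φ ω (S ∩ E p.1)) * C ω p * ((b p.2 ω)⁻¹ * b p.2 ω) := by
              simp only [hb]; ring
          _ = ((a p.1 ω)⁻¹ * φ ω (S ∩ E p.1)) * C ω p := by rw [hcancel, mul_one]
    rw [tsum_congr hterm]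
    have hstep : (∑' p : ℕ × ℕ, ((a p.1 ω)⁻¹ * φ ω (S ∩ E p.1)) * C ω p) =
        ∑' n, φ ω (S ∩ E n) := by
      rw [ENNReal.tsum_prod']
      refine tsum_congr fun n => ?_
      show (∑' m, ((a n ω)⁻¹ * φ ω (S ∩ E n)) * C ω (n, m)) = φ ω (S ∩ E n)
      rw [ENNReal.tsum_mul_left, hCrow ω n]
      rcases eq_or_ne (a n ω) 0 with h0 | h0
      · have hz : φ ω (S ∩ E n) = 0 := by
          refine le_antisymm ?_ zero_le
          calc φ ω (S ∩ E n) ≤ φ ω (E n) := measure_mono inter_subset_right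
            _ = 0 := h0
        rw [hz, h0]
        simp
      · calc (a n ω)⁻¹ * φ ω (S ∩ E n) * a n ω
            = φ ω (S ∩ E n) * ((a n ω) * (a n ω)⁻¹) := by ring
          _ = φ ω (S ∩ E n) := by
            rw [ENNReal.mul_inv_cancel h0 (hafin n ω), mul_one]
    rw [hstep]
    have hdisj : Pairwise (Function.onFun Disjoint fun n => S ∩ E n) :=
      fun i j hij => ((hEd hij).mono inter_subset_right inter_subset_right)
    rw [← measure_iUnion hdisj (fun n => hS.inter (hEm n)), ← inter_iUnion, hEu, inter_univ]
  have hΘsnd : ∀ ω (S : Set Q), MeasurableSet S → Θ ω (Prod.snd ⁻¹' S) = ψ ω S := by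
    intro ω S hS
    haveI := hφp ω; haveI := hψp ω
    simp only [hΘ]
    rw [Measure.sum_apply _ (measurable_snd hS)]
    have hterm : ∀ p : ℕ × ℕ, ((C ω p * (a p.1 ω)⁻¹ * (b p.2 ω)⁻¹) •
        (((φ ω).restrict (E p.1)).prod ((ψ ω).restrict (E p.2)))) (Prod.snd ⁻¹' S) =
        ((b p.2 ω)⁻¹ * ψ ω (S ∩ E p.2)) * C ω p := by
      intro p
      rw [Measure.smul_apply, smul_eq_mul, ← univ_prod, Measure.prod_prod,
        Measure.restrict_apply hS, Measure.restrict_apply MeasurableSet.univ, univ_inter]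
      rcases eq_or_ne (a p.1 ω) 0 with h0 | h0
      · rw [h0, hCaz ω p h0]
        simp
      · have hcancel : (a p.1 ω)⁻¹ * a p.1 ω = 1 := ENNReal.inv_mul_cancel h0 (hafin p.1 ω)
        calc C ω p * (a p.1 ω)⁻¹ * (b p.2 ω)⁻¹ * (φ ω (E p.1) * ψ ω (S ∩ E p.2))
            = ((b p.2 ω)⁻¹ * ψ ω (S ∩ E p.2)) * C ω p * ((a p.1 ω)⁻¹ * a p.1 ω) := by
              simp only [ha]; ring
          _ = ((b p.2 ω)⁻¹ * ψ ω (S ∩ E p.2)) * C ω p := by rw [hcancel, mul_one]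
    rw [tsum_congr hterm]
    have hstep : (∑' p : ℕ × ℕ, ((b p.2 ω)⁻¹ * ψ ω (S ∩ E p.2)) * C ω p) =
        ∑' m, ψ ω (S ∩ E m) := by
      rw [ENNReal.tsum_prod', ENNReal.tsum_comm]
      refine tsum_congr fun m => ?_
      show (∑' n, ((b m ω)⁻¹ * ψ ω (S ∩ E m)) * C ω (n, m)) = ψ ω (S ∩ E m)
      rw [ENNReal.tsum_mul_left, hCcol ω m]
      rcases eq_or_ne (b m ω) 0 with h0 | h0
      · have hz : ψ ω (S ∩ E m) = 0 := by
          refine le_antisymm ?_ zero_le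
          calc ψ ω (S ∩ E m) ≤ ψ ω (E m) := measure_mono inter_subset_right
            _ = 0 := h0
        rw [hz, h0]
        simp
      · calc (b m ω)⁻¹ * ψ ω (S ∩ E m) * b m ω
            = ψ ω (S ∩ E m) * ((b m ω) * (b m ω)⁻¹) := by ring
          _ = ψ ω (S ∩ E m) := by
            rw [ENNReal.mul_inv_cancel h0 (hbfin m ω), mul_one]
    rw [hstep]
    have hdisj : Pairwise (Function.onFun Disjoint fun m => S ∩ E m) :=
      fun i j hij => ((hEd hij).mono inter_subset_right inter_subset_right)
    rw [← measure_iUnion hdisj (fun m => hS.inter (hEm m)), ← inter_iUnion, hEu, inter_univ]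
  -- cost of Θ
  have hΘcost : ∀ ω, ∫⁻ z, edist z.1 z.2 ∂(Θ ω) ≤ c + 7 * εE := by
    intro ω
    haveI := hφp ω; haveI := hψp ω
    simp only [hΘ]
    rw [lintegral_sum_measure]
    have hterm : ∀ p : ℕ × ℕ,
        ∫⁻ z, edist z.1 z.2 ∂((C ω p * (a p.1 ω)⁻¹ * (b p.2 ω)⁻¹) •
          (((φ ω).restrict (E p.1)).prod ((ψ ω).restrict (E p.2)))) ≤
        C ω p * (edist (t p.1) (t p.2) + 2 * εE) := by
      intro p
      rw [lintegral_smul_measure]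
      set τ := ((φ ω).restrict (E p.1)).prod ((ψ ω).restrict (E p.2)) with hτ
      have hτrect : τ (E p.1 ×ˢ E p.2) = a p.1 ω * b p.2 ω := by
        rw [hτ, Measure.prod_prod, Measure.restrict_apply (hEm p.1),
          Measure.restrict_apply (hEm p.2), inter_self, inter_self]
      have hτuniv : τ univ = a p.1 ω * b p.2 ω := by
        rw [hτ, ← univ_prod_univ, Measure.prod_prod,
          Measure.restrict_apply MeasurableSet.univ, univ_inter,
          Measure.restrict_apply MeasurableSet.univ, univ_inter]
      have hτcompl : τ ((E p.1 ×ˢ E p.2)ᶜ) = 0 := by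
        rw [measure_compl ((hEm p.1).prod (hEm p.2)) (measure_ne_top _ _), hτuniv, hτrect,
          tsub_self]
      have hint : ∫⁻ z, edist z.1 z.2 ∂τ ≤
          (edist (t p.1) (t p.2) + 2 * εE) * (a p.1 ω * b p.2 ω) := by
        rw [← lintegral_add_compl (fun z : Q × Q => edist z.1 z.2) ((hEm p.1).prod (hEm p.2)),
          setLIntegral_measure_zero _ _ hτcompl, add_zero]
        calc ∫⁻ z in E p.1 ×ˢ E p.2, edist z.1 z.2 ∂τ
            ≤ ∫⁻ _ in E p.1 ×ˢ E p.2, (edist (t p.1) (t p.2) + 2 * εE) ∂τ := by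
              refine setLIntegral_mono measurable_const fun z hz => ?_
              calc edist z.1 z.2 ≤ edist z.1 (t p.1) + edist (t p.1) z.2 := edist_triangle _ _ _
                _ ≤ edist z.1 (t p.1) + (edist (t p.1) (t p.2) + edist (t p.2) z.2) :=
                    add_le_add_right (edist_triangle _ _ _) _
                _ ≤ εE + (edist (t p.1) (t p.2) + εE) := by
                    refine add_le_add (hEb p.1 z.1 hz.1).2 (add_le_add_right ?_ _)
                    rw [edist_comm]
                    exact (hEb p.2 z.2 hz.2).2
                _ = edist (t p.1) (t p.2) + 2 * εE := by ring
          _ = (edist (t p.1) (t p.2) + 2 * εE) * (a p.1 ω * b p.2 ω) := by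
              rw [setLIntegral_const, hτrect]
      calc C ω p * (a p.1 ω)⁻¹ * (b p.2 ω)⁻¹ * ∫⁻ z, edist z.1 z.2 ∂τ
          ≤ C ω p * (a p.1 ω)⁻¹ * (b p.2 ω)⁻¹ *
            ((edist (t p.1) (t p.2) + 2 * εE) * (a p.1 ω * b p.2 ω)) :=
            mul_le_mul_right hint _
        _ ≤ C ω p * (edist (t p.1) (t p.2) + 2 * εE) := by
            rcases eq_or_ne (a p.1 ω) 0 with h0 | h0
            · rw [hCaz ω p h0]
              simp
            rcases eq_or_ne (b p.2 ω) 0 with h1 | h1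
            · rw [hCbz ω p h1]
              simp
            refine le_of_eq ?_
            calc C ω p * (a p.1 ω)⁻¹ * (b p.2 ω)⁻¹ *
                ((edist (t p.1) (t p.2) + 2 * εE) * (a p.1 ω * b p.2 ω))
                = C ω p * (edist (t p.1) (t p.2) + 2 * εE) *
                  ((a p.1 ω * (a p.1 ω)⁻¹) * (b p.2 ω * (b p.2 ω)⁻¹)) := by ring
              _ = C ω p * (edist (t p.1) (t p.2) + 2 * εE) := by
                  rw [ENNReal.mul_inv_cancel h0 (hafin p.1 ω),
                    ENNReal.mul_inv_cancel h1 (hbfin p.2 ω), one_mul, mul_one]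
    calc (∑' p : ℕ × ℕ, ∫⁻ z, edist z.1 z.2 ∂((C ω p * (a p.1 ω)⁻¹ * (b p.2 ω)⁻¹) •
          (((φ ω).restrict (E p.1)).prod ((ψ ω).restrict (E p.2)))))
        ≤ ∑' p : ℕ × ℕ, C ω p * (edist (t p.1) (t p.2) + 2 * εE) :=
          ENNReal.tsum_le_tsum hterm
      _ = (∑' p : ℕ × ℕ, C ω p * edist (t p.1) (t p.2)) + 2 * εE * ∑' p : ℕ × ℕ, C ω p := by
          rw [← ENNReal.tsum_mul_left, ← ENNReal.tsum_add]
          refine tsum_congr fun p => ?_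
          ring
      _ ≤ (c + 5 * εE) + 2 * εE * 1 := by
          refine add_le_add (hCcost ω) ?_
          rw [hCtot ω]
      _ = c + 7 * εE := by ring
  -- the coupling
  set Γ := ν.bind Θ with hΓ
  have hmarg1 : Γ.map Prod.fst = ν.bind φ := by
    ext S hS
    rw [Measure.map_apply measurable_fst hS, hΓ, Measure.bind_apply (measurable_fst hS) measΘ.aemeasurable,
      Measure.bind_apply hS hφ.aemeasurable]
    exact lintegral_congr fun ω => hΘfst ω S hS
  have hmarg2 : Γ.map Prod.snd = ν.bind ψ := by
    ext S hS
    rw [Measure.map_apply measurable_snd hS, hΓ, Measure.bind_apply (measurable_snd hS) measΘ.aemeasurable,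
      Measure.bind_apply hS hψ.aemeasurable]
    exact lintegral_congr fun ω => hΘsnd ω S hS
  have hΓcost : transportCost 1 Γ ≤ c + 7 * εE := by
    rw [transportCost_one, hΓ, Measure.lintegral_bind measΘ.aemeasurable measurable_edist.aemeasurable]
    calc ∫⁻ ω, ∫⁻ z, edist z.1 z.2 ∂(Θ ω) ∂ν ≤ ∫⁻ _, (c + 7 * εE) ∂ν :=
          lintegral_mono hΘcost
      _ = c + 7 * εE := by rw [lintegral_const, measure_univ, mul_one]
  exact le_trans (minCost_le_cost ⟨hmarg1, hmarg2⟩) hΓcost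

end CMain
lemma minCost_bind_le {Ω : Type*} [MeasurableSpace Ω]
    {Q : Type*} [MetricSpace Q] [MeasurableSpace Q] [BorelSpace Q]
    [TopologicalSpace.SeparableSpace Q] [Nonempty Q]
    (ν : Measure Ω) [IsProbabilityMeasure ν]
    (φ ψ : Ω → Measure Q) (hφ : Measurable φ) (hψ : Measurable ψ)
    (hφp : ∀ ω, IsProbabilityMeasure (φ ω)) (hψp : ∀ ω, IsProbabilityMeasure (ψ ω))
    (qb : Q)
    (hφm : ∀ ω, ∫⁻ q, edist q qb ∂(φ ω) ≠ ∞) (hψm : ∀ ω, ∫⁻ q, edist q qb ∂(ψ ω) ≠ ∞)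
    (c : ℝ≥0∞) (hc : c ≠ ∞) (hmin : ∀ ω, minCost 1 (φ ω) (ψ ω) ≤ c) :
    minCost 1 (ν.bind φ) (ν.bind ψ) ≤ c := by
  refine ENNReal.le_of_forall_pos_le_add fun δ hδ _ => ?_
  have h := minCost_bind_le_eps ν φ ψ hφ hψ hφp hψp qb hφm hψm c hc hmin
    (ε := (δ : ℝ) / 7) (by positivity)
  refine h.trans (add_le_add_right (le_of_eq ?_) c)
  calc (7 : ℝ≥0∞) * ENNReal.ofReal ((δ : ℝ) / 7)
      = ENNReal.ofReal (7 * ((δ : ℝ) / 7)) := by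
        rw [ENNReal.ofReal_mul (by norm_num : (0:ℝ) ≤ 7)]
        norm_num
    _ = ENNReal.ofReal (δ : ℝ) := by congr 1; ring
    _ = (δ : ℝ≥0∞) := ENNReal.ofReal_coe_nnreal

end OQ

open OQ

/-- Let `(M,d)` be a separable complete metric space with a Markov chain
`μ : M → P₁(M)` having Ollivier coarse Ricci curvature bounded below by `k`, i.e.
`W₁(μ_x, μ_y) ≤ (1-k) d(x,y)`.  Let `G` be a compact group acting isometrically with Haar
probability measure `νG`, quotient map `pr : M → Q`, and let the quotient Markov chain be
`μ̌_{x*} = ∫_G pr_♯ μ_{g•x} dνG(g)`.  Then `W₁(μ̌_{x*}, μ̌_{y*}) ≤ (1-k) d*(x*, y*)`. -/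
theorem ollivier_quotient
    {M : Type*} [MetricSpace M] [CompleteSpace M] [TopologicalSpace.SeparableSpace M]
    [MeasurableSpace M] [BorelSpace M]
    {G : Type*} [Group G] [TopologicalSpace G] [IsTopologicalGroup G] [CompactSpace G]
    [MeasurableSpace G] [BorelSpace G] [MulAction G M]
    (hcont : Continuous fun q : G × M => q.1 • q.2)
    (hiso : ∀ (g : G) (x y : M), dist (g • x) (g • y) = dist x y)
    (νG : Measure G) [IsProbabilityMeasure νG] [νG.IsMulLeftInvariant]
    {Q : Type*} [MetricSpace Q] [MeasurableSpace Q] [BorelSpace Q]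
    (pr : M → Q) (hsurj : Function.Surjective pr) (hmeas : Measurable pr)
    (hfib : ∀ x y : M, pr x = pr y ↔ y ∈ MulAction.orbit G x)
    (hdist : ∀ x y : M, dist (pr x) (pr y) = ⨅ g : G, dist (g • x) y)
    (μ : M → Measure M) (hprob : ∀ x, IsProbabilityMeasure (μ x))
    (hmom : ∀ x, FinMoment 1 (μ x))
    (k : ℝ)
    (hric : ∀ x y : M, Wp 1 (μ x) (μ y) ≤ ENNReal.ofReal ((1 - k) * dist x y))
    (μq : Q → Measure Q)
    (hμq : ∀ x : M, μq (pr x) = νG.bind fun g => (μ (g • x)).map pr) :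
    ∀ x y : M, Wp 1 (μq (pr x)) (μq (pr y)) ≤ ENNReal.ofReal ((1 - k) * dist (pr x) (pr y)) := by
  intro x y
  classical
  -- the quotient map is 1-Lipschitz
  have hbdd : ∀ x' y' : M, BddBelow (range fun g : G => dist (g • x') y') := by
    intro x' y'
    exact ⟨0, by rintro r ⟨g, rfl⟩; exact dist_nonneg⟩
  have hprQ : ∀ a b : M, dist (pr a) (pr b) ≤ dist a b := by
    intro a b
    rw [hdist a b]
    refine ciInf_le_of_le (hbdd a b) 1 ?_
    rw [one_smul]
  have hprlip : LipschitzWith 1 pr :=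
    LipschitzWith.of_dist_le_mul fun a b => by simpa using hprQ a b
  haveI : TopologicalSpace.SeparableSpace Q := hsurj.denseRange.separableSpace hprlip.continuous
  haveI : Nonempty Q := ⟨pr x⟩
  haveI : SecondCountableTopology Q := UniformSpace.secondCountable_of_separable Q
  haveI : SecondCountableTopology M := UniformSpace.secondCountable_of_separable M
  have hedist : ∀ a b : M, edist (pr a) (pr b) ≤ edist a b := by
    intro a b
    rw [edist_dist, edist_dist]
    exact ENNReal.ofReal_le_ofReal (hprQ a b)
  -- measurability of the Markov chain
  have hlip' : ∀ p q : M, minCost 1 (μ p) (μ q) ≤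
      ENNReal.ofReal ((Real.toNNReal |1 - k|) * dist p q) := by
    intro p q
    have h := hric p q
    rw [Wp_one] at h
    refine h.trans (ENNReal.ofReal_le_ofReal ?_)
    rw [Real.coe_toNNReal _ (abs_nonneg _)]
    exact mul_le_mul_of_nonneg_right (le_abs_self _) dist_nonneg
  have hmeasμ : Measurable μ := measurable_markov μ hprob (Real.toNNReal |1 - k|) hlip'
  -- optimal group element
  have hsmul : ∀ z : M, Continuous fun g : G => g • z :=
    fun z => hcont.comp (continuous_id.prodMk continuous_const)
  have hgc : Continuous fun g : G => dist (g • x) y := (hsmul x).dist continuous_const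
  obtain ⟨g₀, -, hg₀⟩ := isCompact_univ.exists_isMinOn univ_nonempty hgc.continuousOn
  have hg₀' : ∀ g : G, dist (g₀ • x) y ≤ dist (g • x) y := fun g => hg₀ (mem_univ g)
  have hdxy : dist (pr x) (pr y) = dist (g₀ • x) y := by
    rw [hdist x y]
    exact le_antisymm (ciInf_le (hbdd x y) g₀) (le_ciInf hg₀')
  set x' := g₀ • x with hx'
  have hprx : pr x = pr x' := (hfib x x').mpr (MulAction.mem_orbit x g₀)
  -- data for the convexity lemma
  have hφm : Measurable fun g : G => (μ (g • x')).map pr :=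
    (Measure.measurable_map pr hmeas).comp (hmeasμ.comp (hsmul x').measurable)
  have hψm : Measurable fun g : G => (μ (g • y)).map pr :=
    (Measure.measurable_map pr hmeas).comp (hmeasμ.comp (hsmul y).measurable)
  have hφp : ∀ g : G, IsProbabilityMeasure ((μ (g • x')).map pr) := fun g => by
    haveI := hprob (g • x')
    exact Measure.isProbabilityMeasure_map hmeas.aemeasurable
  have hψp : ∀ g : G, IsProbabilityMeasure ((μ (g • y)).map pr) := fun g => by
    haveI := hprob (g • y)
    exact Measure.isProbabilityMeasure_map hmeas.aemeasurable
  have hmom' : ∀ z : M, (∫⁻ q, edist q (pr x) ∂((μ z).map pr)) ≠ ∞ := by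
    intro z
    haveI := hprob z
    obtain ⟨w₀, hw₀⟩ := hmom z
    have hw : (∫⁻ w, edist w w₀ ∂(μ z)) ≠ ∞ := by
      have heq : ∀ w : M, ENNReal.ofReal (dist w w₀ ^ (1:ℝ)) = edist w w₀ := fun w => by
        rw [Real.rpow_one, edist_dist]
      rwa [lintegral_congr heq] at hw₀
    rw [lintegral_map (show Measurable fun q : Q => edist q (pr x) from
      (continuous_id.edist continuous_const).measurable) hmeas]
    have hptw : ∀ w : M, edist (pr w) (pr x) ≤ edist w w₀ + edist (pr w₀) (pr x) := by
      intro w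
      calc edist (pr w) (pr x) ≤ edist (pr w) (pr w₀) + edist (pr w₀) (pr x) :=
            edist_triangle _ _ _
        _ ≤ edist w w₀ + edist (pr w₀) (pr x) := add_le_add_left (hedist w w₀) _
    refine ne_top_of_le_ne_top ?_ (lintegral_mono hptw)
    rw [lintegral_add_right _ measurable_const, lintegral_const, measure_univ, mul_one]
    exact ENNReal.add_ne_top.mpr ⟨hw, edist_ne_top _ _⟩
  set cc : ℝ≥0∞ := ENNReal.ofReal ((1 - k) * dist (pr x) (pr y)) with hcc
  have hming : ∀ g : G, minCost 1 ((μ (g • x')).map pr) ((μ (g • y)).map pr) ≤ cc := by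
    intro g
    haveI := hprob (g • x')
    haveI := hprob (g • y)
    refine le_trans (minCost_map_le hmeas hedist _ _) ?_
    have h := hric (g • x') (g • y)
    rw [Wp_one] at h
    refine h.trans (le_of_eq ?_)
    rw [hcc, hiso g x' y, hdxy]
  rw [hprx, hμq x', hμq y, Wp_one]
  exact minCost_bind_le νG _ _ hφm hψm hφp hψp (pr x)
    (fun g => hmom' (g • x')) (fun g => hmom' (g • y)) cc
    (by rw [hcc]; exact ENNReal.ofReal_ne_top) hming
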